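/- Assume the structure constants are nonnegative and irreducible. Then the map z* ↦ (1/ϖ(z*)) · z* is a bijection from the set of fixed points z* of W that are nonnegative and normalizable (all coordinates of z* are ≥ 0 and ϖ(z*) > 0) onto the set of fixed points of V, i.e. the set of z ∈ S^{n,ν} with ϖ(W(z)) ≠ 0 and V(z) = z. -/
import Mathlib


open Filter

/-- The gonosomic evolution operator `W` on `ℝ^n × ℝ^ν` associated with structure constants
`γ_{ipk}` and `γ̃_{ipr}`: it maps `((x_i), (y_p))` to `((x'_k), (y'_r))` with
`x'_k = Σ_{i,p} γ_{ipk} x_i y_p` and `y'_r = Σ_{i,p} γ̃_{ipr} x_i y_p`. -/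
noncomputable def W {n ν : ℕ} (γ : Fin n → Fin ν → Fin n → ℝ)
    (γ' : Fin n → Fin ν → Fin ν → ℝ)
    (z : (Fin n → ℝ) × (Fin ν → ℝ)) : (Fin n → ℝ) × (Fin ν → ℝ) :=
  (fun k => ∑ i, ∑ p, γ i p k * z.1 i * z.2 p,
   fun r => ∑ i, ∑ p, γ' i p r * z.1 i * z.2 p)

/-- The linear form `ϖ(z) = Σ_i x_i + Σ_p y_p` on `ℝ^n × ℝ^ν`. -/
noncomputable def piW {n ν : ℕ} (z : (Fin n → ℝ) × (Fin ν → ℝ)) : ℝ :=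
  ∑ i, z.1 i + ∑ p, z.2 p

/-- `γ_{ip} = Σ_k γ_{ipk}`. -/
noncomputable def gA {n ν : ℕ} (γ : Fin n → Fin ν → Fin n → ℝ)
    (i : Fin n) (p : Fin ν) : ℝ := ∑ k, γ i p k

/-- `γ̃_{ip} = Σ_r γ̃_{ipr}`. -/
noncomputable def gB {n ν : ℕ} (γ' : Fin n → Fin ν → Fin ν → ℝ)
    (i : Fin n) (p : Fin ν) : ℝ := ∑ r, γ' i p r

/-- `σ_{ip} = γ_{ip} + γ̃_{ip}`. -/
noncomputable def σc {n ν : ℕ} (γ : Fin n → Fin ν → Fin n → ℝ)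
    (γ' : Fin n → Fin ν → Fin ν → ℝ) (i : Fin n) (p : Fin ν) : ℝ :=
  gA γ i p + gB γ' i p

/-- The set `O^{n,ν}` of nonnegative points `((x_i),(y_p))` with `x_i y_p = 0` for every
pair `(i,p)` with `σ_{ip} ≠ 0`. -/
def Oset {n ν : ℕ} (γ : Fin n → Fin ν → Fin n → ℝ)
    (γ' : Fin n → Fin ν → Fin ν → ℝ) : Set ((Fin n → ℝ) × (Fin ν → ℝ)) :=
  {z | (∀ i, 0 ≤ z.1 i) ∧ (∀ p, 0 ≤ z.2 p) ∧
    ∀ i p, σc γ γ' i p ≠ 0 → z.1 i * z.2 p = 0}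

/-- The set `S^{n,ν} = S^{n+ν-1} \ O^{n,ν}`, where `S^{n+ν-1}` is the simplex of nonnegative
points with `ϖ(z) = 1`. -/
def Sset {n ν : ℕ} (γ : Fin n → Fin ν → Fin n → ℝ)
    (γ' : Fin n → Fin ν → Fin ν → ℝ) : Set ((Fin n → ℝ) × (Fin ν → ℝ)) :=
  {z | (∀ i, 0 ≤ z.1 i) ∧ (∀ p, 0 ≤ z.2 p) ∧ piW z = 1} \ Oset γ γ'

/-- The normalized gonosomic operator `V(z) = (1/ϖ(W z)) • W z` (junk value when
`ϖ(W z) = 0`, since in `ℝ` we have `0⁻¹ = 0`). -/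
noncomputable def V {n ν : ℕ} (γ : Fin n → Fin ν → Fin n → ℝ)
    (γ' : Fin n → Fin ν → Fin ν → ℝ)
    (z : (Fin n → ℝ) × (Fin ν → ℝ)) : (Fin n → ℝ) × (Fin ν → ℝ) :=
  (piW (W γ γ' z))⁻¹ • W γ γ' z

lemma piW_smul {n ν : ℕ} (c : ℝ) (z : (Fin n → ℝ) × (Fin ν → ℝ)) :
    piW (c • z) = c * piW z := by
  simp [piW, Finset.mul_sum, mul_add]

lemma W_smul {n ν : ℕ} (γ : Fin n → Fin ν → Fin n → ℝ)
    (γ' : Fin n → Fin ν → Fin ν → ℝ) (c : ℝ) (z : (Fin n → ℝ) × (Fin ν → ℝ)) :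
    W γ γ' (c • z) = (c * c) • W γ γ' z := by
  unfold W
  refine Prod.ext ?_ ?_ <;> funext k <;>
    simp only [Prod.fst, Prod.snd, Pi.smul_apply, smul_eq_mul, Finset.mul_sum,
      Prod.smul_fst, Prod.smul_snd] <;>
    exact Finset.sum_congr rfl fun i _ => Finset.sum_congr rfl fun p _ => by ring

lemma piW_W {n ν : ℕ} (γ : Fin n → Fin ν → Fin n → ℝ)
    (γ' : Fin n → Fin ν → Fin ν → ℝ) (z : (Fin n → ℝ) × (Fin ν → ℝ)) :
    piW (W γ γ' z) = ∑ i, ∑ p, σc γ γ' i p * z.1 i * z.2 p := by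
  simp only [piW, W, σc, gA, gB, add_mul, Finset.sum_mul, Finset.sum_add_distrib]
  congr 1
  · rw [Finset.sum_comm]
    exact Finset.sum_congr rfl fun i _ => Finset.sum_comm
  · rw [Finset.sum_comm]
    exact Finset.sum_congr rfl fun i _ => Finset.sum_comm


/-- Suppose the structure constants are nonnegative and irreducible.  Then
`z* ↦ (1/ϖ(z*)) • z*` is a bijection from the set of nonnegative normalizable fixed points of
`W` (all coordinates `≥ 0`, `ϖ(z*) > 0`, `W z* = z*`) onto the set of fixed points of `V`,
i.e. the set of `z ∈ S^{n,ν}` with `ϖ(W z) ≠ 0` and `V z = z`. -/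
theorem stmt_18 {n ν : ℕ} (hn : 1 ≤ n) (hν : 1 ≤ ν)
    (γ : Fin n → Fin ν → Fin n → ℝ) (γ' : Fin n → Fin ν → Fin ν → ℝ)
    (hγ : ∀ i p k, 0 ≤ γ i p k) (hγ' : ∀ i p r, 0 ≤ γ' i p r)
    (hirr₁ : ∀ k : Fin n, ∃ (i : Fin n) (p : Fin ν), γ i p k ≠ 0)
    (hirr₂ : ∀ r : Fin ν, ∃ (i : Fin n) (p : Fin ν), γ' i p r ≠ 0) :
    Set.BijOn (fun z : (Fin n → ℝ) × (Fin ν → ℝ) => (piW z)⁻¹ • z)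
      {z | (∀ i, 0 ≤ z.1 i) ∧ (∀ p, 0 ≤ z.2 p) ∧ 0 < piW z ∧ W γ γ' z = z}
      {z | z ∈ Sset γ γ' ∧ piW (W γ γ' z) ≠ 0 ∧ V γ γ' z = z} := by
  refine ⟨?_, ?_, ?_⟩
  · -- MapsTo
    rintro z ⟨hx, hy, hpos, hfix⟩
    have hne : piW z ≠ 0 := ne_of_gt hpos
    set c : ℝ := (piW z)⁻¹ with hc
    have hcpos : 0 < c := inv_pos.2 hpos
    have hcne : c ≠ 0 := ne_of_gt hcpos
    have hWz : W γ γ' (c • z) = (c * c) • z := by rw [W_smul, hfix]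
    have hpiWz : piW (W γ γ' (c • z)) = c := by
      rw [hWz, piW_smul, hc]
      field_simp
    have hpi1 : piW (c • z) = 1 := by rw [piW_smul, hc, inv_mul_cancel₀ hne]
    refine ⟨⟨⟨fun i => mul_nonneg hcpos.le (hx i),
        fun p => mul_nonneg hcpos.le (hy p), hpi1⟩, ?_⟩,
      by rw [hpiWz]; exact hcne, ?_⟩
    · rintro ⟨-, -, h0⟩
      have hzero : piW (W γ γ' (c • z)) = 0 := by
        rw [piW_W]
        refine Finset.sum_eq_zero fun i _ => Finset.sum_eq_zero fun p _ => ?_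
        by_cases hσ : σc γ γ' i p = 0
        · rw [hσ, zero_mul, zero_mul]
        · rw [mul_assoc, h0 i p hσ, mul_zero]
      rw [hpiWz] at hzero
      exact hcne hzero
    · show V γ γ' (c • z) = c • z
      unfold V
      rw [hpiWz, hWz, smul_smul]
      congr 1
      field_simp
  · -- InjOn
    rintro z₁ ⟨hx₁, hy₁, hp₁, hf₁⟩ z₂ ⟨hx₂, hy₂, hp₂, hf₂⟩ heq
    simp only at heq
    have hne₁ : piW z₁ ≠ 0 := ne_of_gt hp₁
    have hne₂ : piW z₂ ≠ 0 := ne_of_gt hp₂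
    set c : ℝ := piW z₂ * (piW z₁)⁻¹ with hcdef
    have h2 : z₂ = c • z₁ := by
      calc z₂ = piW z₂ • ((piW z₂)⁻¹ • z₂) := by
              rw [smul_smul, mul_inv_cancel₀ hne₂, one_smul]
        _ = piW z₂ • ((piW z₁)⁻¹ • z₁) := by rw [heq]
        _ = c • z₁ := by rw [smul_smul]
    have hcpos : 0 < c := mul_pos hp₂ (inv_pos.2 hp₁)
    have key : (c * c) • z₁ = c • z₁ := by
      have h := hf₂
      rw [h2, W_smul, hf₁] at h
      exact h
    have key2 : (c * c) * piW z₁ = c * piW z₁ := by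
      rw [← piW_smul, ← piW_smul, key]
    have hcc : c * c = c := mul_right_cancel₀ hne₁ key2
    have hc1 : c = 1 := by
      have := mul_right_cancel₀ (ne_of_gt hcpos) (hcc.trans (one_mul c).symm)
      exact this
    rw [h2, hc1, one_smul]
  · -- SurjOn
    rintro z ⟨⟨⟨hx, hy, hpi⟩, hnotO⟩, hμne, hV⟩
    set μ : ℝ := piW (W γ γ' z) with hμdef
    have hσ : ∀ i p, 0 ≤ σc γ γ' i p := fun i p =>
      add_nonneg (Finset.sum_nonneg fun k _ => hγ i p k)
        (Finset.sum_nonneg fun r _ => hγ' i p r)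
    have hμ0 : 0 ≤ μ := by
      rw [hμdef, piW_W]
      exact Finset.sum_nonneg fun i _ => Finset.sum_nonneg fun p _ =>
        mul_nonneg (mul_nonneg (hσ i p) (hx i)) (hy p)
    have hμ : 0 < μ := lt_of_le_of_ne hμ0 (Ne.symm hμne)
    have hμne' : μ ≠ 0 := ne_of_gt hμ
    have hWz : W γ γ' z = μ • z := by
      have h : μ⁻¹ • W γ γ' z = z := hV
      calc W γ γ' z = μ • (μ⁻¹ • W γ γ' z) := by
            rw [smul_smul, mul_inv_cancel₀ hμne', one_smul]
        _ = μ • z := by rw [h]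
    refine ⟨μ⁻¹ • z, ⟨fun i => mul_nonneg (inv_nonneg.2 hμ0) (hx i),
      fun p => mul_nonneg (inv_nonneg.2 hμ0) (hy p), ?_, ?_⟩, ?_⟩
    · rw [piW_smul, hpi, mul_one]
      exact inv_pos.2 hμ
    · rw [W_smul, hWz, smul_smul]
      congr 1
      field_simp
    · show (piW (μ⁻¹ • z))⁻¹ • (μ⁻¹ • z) = z
      rw [piW_smul, hpi, mul_one, inv_inv, smul_smul, mul_inv_cancel₀ hμne', one_smul]
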